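/- Let S be a finite type and μ a fully supported probability measure on {0,1}^S satisfying the FKG lattice condition: μ(ω₁ ∨ ω₂)·μ(ω₁ ∧ ω₂) ≥ μ(ω₁)·μ(ω₂) for all ω₁, ω₂. Then for any e ∈ S and any two configurations ξ ≥ ζ on a subset F ⊆ S with e ∉ F, μ(ω(e)=1 | ω agrees with ξ on F) ≥ μ(ω(e)=1 | ω agrees with ζ on F). -/

import Mathlib

open MeasureTheory

open scoped FinsetFamily

lemma meas_eq_sum {α : Type*} [Fintype α] [MeasurableSpace α] [MeasurableSingletonClass α]
    (μ : Measure α) (A : Set α) :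
    μ A = ∑ ω ∈ (Set.toFinite A).toFinset, μ {ω} := by
  classical
  conv_lhs => rw [show A = ⋃ ω ∈ (Set.toFinite A).toFinset, {ω} by ext x; simp only [Set.Finite.mem_toFinset, Set.mem_iUnion,
      Set.mem_singleton_iff, exists_prop, exists_eq_right']]
  rw [measure_biUnion_finset]
  · intro x _ y _ hxy
    simp [Set.disjoint_singleton, hxy]
  · intro b _
    exact measurableSet_singleton b

theorem stmt_17 {S : Type*} [Fintype S] (μ : Measure (S → Bool)) [IsProbabilityMeasure μ]
    (hfull : ∀ ω : S → Bool, 0 < μ {ω})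
    (hFKG : ∀ ω₁ ω₂ : S → Bool, μ {ω₁} * μ {ω₂} ≤ μ {ω₁ ⊔ ω₂} * μ {ω₁ ⊓ ω₂})
    (e : S) (F : Finset S) (he : e ∉ F) (ξ ζ : S → Bool) (hξζ : ∀ i ∈ F, ζ i ≤ ξ i) :
    μ {ω | ω e = true ∧ ∀ i ∈ F, ω i = ζ i} / μ {ω | ∀ i ∈ F, ω i = ζ i}
      ≤ μ {ω | ω e = true ∧ ∀ i ∈ F, ω i = ξ i} / μ {ω | ∀ i ∈ F, ω i = ξ i} := by
  classical
  set A : Set (S → Bool) := {ω | ω e = true ∧ ∀ i ∈ F, ω i = ξ i} with hA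
  set B : Set (S → Bool) := {ω | ω e = true ∧ ∀ i ∈ F, ω i = ζ i} with hB
  set Ca : Set (S → Bool) := {ω | ∀ i ∈ F, ω i = ξ i} with hCa
  set Cb : Set (S → Bool) := {ω | ∀ i ∈ F, ω i = ζ i} with hCb
  -- point mass function in ℝ≥0
  set f : (S → Bool) → NNReal := fun ω => (μ {ω}).toNNReal with hf
  have hfin : ∀ X : Set (S → Bool), μ X ≠ ⊤ := fun X => measure_ne_top μ X
  -- sums over finsets
  have hsum : ∀ X : Set (S → Bool), μ X = ∑ ω ∈ (Set.toFinite X).toFinset, (f ω : ENNReal) := by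
    intro X
    rw [meas_eq_sum μ X]
    refine Finset.sum_congr rfl fun ω _ => ?_
    exact (ENNReal.coe_toNNReal (hfin {ω})).symm
  -- key inequality via four functions theorem
  have key : (μ B).toNNReal * (μ Ca).toNNReal ≤ (μ Cb).toNNReal * (μ A).toNNReal := by
    have hX : ∀ X : Set (S → Bool), (μ X).toNNReal = ∑ ω ∈ (Set.toFinite X).toFinset, f ω := by
      intro X
      have h2 : ((μ X).toNNReal : ENNReal) = ((∑ ω ∈ (Set.toFinite X).toFinset, f ω : NNReal) : ENNReal) := by
        rw [ENNReal.coe_toNNReal (hfin X), hsum X, ENNReal.coe_finset_sum]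
      exact_mod_cast h2
    rw [hX, hX, hX, hX]
    have h4 := four_functions_theorem (β := NNReal) f f f f (fun _ => zero_le)
      (fun _ => zero_le) (fun _ => zero_le) (fun _ => zero_le)
      (fun a b => by
        have := hFKG a b
        have h' : (μ {a}).toNNReal * (μ {b}).toNNReal
            ≤ (μ {a ⊔ b}).toNNReal * (μ {a ⊓ b}).toNNReal := by
          rw [← ENNReal.toNNReal_mul, ← ENNReal.toNNReal_mul]
          exact ENNReal.toNNReal_mono (by
            exact ENNReal.mul_ne_top (hfin _) (hfin _)) this
        exact h'.trans_eq (mul_comm _ _))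
      (Set.toFinite B).toFinset (Set.toFinite Ca).toFinset
    refine h4.trans (mul_le_mul' ?_ ?_)
    · apply Finset.sum_le_sum_of_subset
      intro x hx
      rw [Finset.mem_infs] at hx
      obtain ⟨a, ha, b, hb, rfl⟩ := hx
      simp only [Set.Finite.mem_toFinset, hB, hCa, Set.mem_setOf_eq] at ha hb
      rw [Set.Finite.mem_toFinset]
      show ∀ i ∈ F, (a ⊓ b) i = ζ i
      intro i hi
      have h1 : (a ⊓ b) i = a i ⊓ b i := rfl
      rw [h1, ha.2 i hi, hb i hi]
      exact inf_eq_left.mpr (hξζ i hi)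
    · apply Finset.sum_le_sum_of_subset
      intro x hx
      rw [Finset.mem_sups] at hx
      obtain ⟨a, ha, b, hb, rfl⟩ := hx
      simp only [Set.Finite.mem_toFinset, hB, hCa, Set.mem_setOf_eq] at ha hb
      rw [Set.Finite.mem_toFinset]
      show (a ⊔ b) e = true ∧ ∀ i ∈ F, (a ⊔ b) i = ξ i
      constructor
      · have h1 : (a ⊔ b) e = a e ⊔ b e := rfl
        rw [h1, ha.1]
        exact sup_eq_left.mpr (by cases b e <;> simp)
      · intro i hi
        have h1 : (a ⊔ b) i = a i ⊔ b i := rfl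
        rw [h1, ha.2 i hi, hb i hi]
        exact sup_eq_right.mpr (hξζ i hi)
  -- positivity of denominators
  have hCa_pos : 0 < μ Ca := lt_of_lt_of_le (hfull ξ) (measure_mono (by
    intro ω hω; simp only [Set.mem_singleton_iff] at hω; subst hω
    exact fun i _ => rfl))
  have hCb_pos : 0 < μ Cb := lt_of_lt_of_le (hfull ζ) (measure_mono (by
    intro ω hω; simp only [Set.mem_singleton_iff] at hω; subst hω
    exact fun i _ => rfl))
  -- convert goal to NNReal
  have hcoe : ∀ X : Set (S → Bool), μ X = ((μ X).toNNReal : ENNReal) := fun X =>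
    (ENNReal.coe_toNNReal (hfin X)).symm
  rw [hcoe B, hcoe Cb, hcoe A, hcoe Ca, ← ENNReal.coe_div, ← ENNReal.coe_div, ENNReal.coe_le_coe]
  · have hb' : 0 < (μ Cb).toNNReal := by
      rw [ENNReal.toNNReal_pos_iff] ; exact ⟨hCb_pos, measure_lt_top μ _⟩ 
    have ha' : 0 < (μ Ca).toNNReal := by
      rw [ENNReal.toNNReal_pos_iff] ; exact ⟨hCa_pos, measure_lt_top μ _⟩ 
    rw [div_le_div_iff₀ hb' ha']
    calc (μ B).toNNReal * (μ Ca).toNNReal ≤ (μ Cb).toNNReal * (μ A).toNNReal := key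
      _ = (μ A).toNNReal * (μ Cb).toNNReal := mul_comm _ _
  · simp [ENNReal.toNNReal_eq_zero_iff, hCa_pos.ne', hfin Ca]
  · simp [ENNReal.toNNReal_eq_zero_iff, hCb_pos.ne', hfin Cb]
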